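/- Fix p₁, p₂, p₃ ∈ (1,∞) with 1/p₁ + 1/p₂ + 1/p₃ ≤ 1, and define 1/r = 1/p₁ + 1/p₂ + 1/p₃. Then ‖Σ_{i=1}^n e_i ⊗ e_i ⊗ e_i‖_{ℓ_{p₁}^n ⊗̂ ℓ_{p₂}^n ⊗̂ ℓ_{p₃}^n} = n^{1/r}. -/

import Mathlib

set_option maxHeartbeats 1000000
set_option synthInstance.maxHeartbeats 400000
set_option linter.unreachableTactic false
set_option linter.unusedTactic false

open scoped TensorProduct
open TensorProduct Finset

/-- The `ℓ_p` norm of a vector in `ℝⁿ`. -/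
noncomputable def pNorm (p : ℝ) {n : ℕ} (x : Fin n → ℝ) : ℝ :=
  (∑ i, |x i| ^ p) ^ (1 / p)

lemma pNorm_nonneg (p : ℝ) {n : ℕ} (x : Fin n → ℝ) : 0 ≤ pNorm p x := by
  apply Real.rpow_nonneg
  exact Finset.sum_nonneg fun i _ => Real.rpow_nonneg (abs_nonneg _) _

lemma pNorm_const_abs {p : ℝ} (hp : 0 < p) {n : ℕ} {x : Fin n → ℝ} {c : ℝ} (hc : 0 ≤ c)
    (h : ∀ i, |x i| = c) : pNorm p x = c * (n : ℝ) ^ (1 / p) := by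
  unfold pNorm
  have : ∀ i : Fin n, |x i| ^ p = c ^ p := fun i => by rw [h i]
  rw [Finset.sum_congr rfl (fun i _ => this i), Finset.sum_const, Finset.card_univ,
    Fintype.card_fin, nsmul_eq_mul, Real.mul_rpow (by positivity) (by positivity),
    ← Real.rpow_mul hc, mul_one_div_cancel hp.ne', Real.rpow_one, mul_comm]

/-- sign vector -/
def sgn {n : ℕ} (s : Fin n → Bool) : Fin n → ℝ := fun i => if s i then 1 else -1

lemma sgn_abs {n : ℕ} (s : Fin n → Bool) (i : Fin n) : |sgn s i| = 1 := by
  unfold sgn; split <;> simp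

lemma sum_sgn_mul {n : ℕ} (i j : Fin n) :
    ∑ s : Fin n → Bool, sgn s i * sgn s j = if i = j then (2 : ℝ) ^ n else 0 := by
  rcases eq_or_ne i j with rfl | hij
  · simp only [if_pos rfl]
    have : ∀ s : Fin n → Bool, sgn s i * sgn s i = 1 := by
      intro s; unfold sgn; split <;> norm_num
    rw [Finset.sum_congr rfl fun s _ => this s, Finset.sum_const, Finset.card_univ]
    simp [Fintype.card_fun]
  · rw [if_neg hij]
    have hinv : Function.Involutive (fun s : Fin n → Bool => Function.update s i (!s i)) := by
      intro s
      funext k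
      rcases eq_or_ne k i with rfl | hk
      · simp
      · simp [Function.update_of_ne hk]
    have := Equiv.sum_comp hinv.toPerm (fun s : Fin n → Bool => sgn s i * sgn s j)
    have key : ∀ s : Fin n → Bool,
        sgn (Function.update s i (!s i)) i * sgn (Function.update s i (!s i)) j
          = -(sgn s i * sgn s j) := by
      intro s
      have h1 : sgn (Function.update s i (!s i)) i = -(sgn s i) := by
        unfold sgn; simp only [Function.update_self]; cases h : s i <;> simp [h]
      have h2 : sgn (Function.update s i (!s i)) j = sgn s j := by
        unfold sgn; rw [Function.update_of_ne (Ne.symm hij)]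
      rw [h1, h2]; ring
    simp only [Function.Involutive.coe_toPerm] at this
    rw [Finset.sum_congr rfl fun s _ => key s, Finset.sum_neg_distrib] at this
    linarith

open scoped NNReal

lemma holder3_nnreal {n : ℕ} {p₁ p₂ p₃ : ℝ} (hp₁ : 1 < p₁) (hp₂ : 1 < p₂) (hp₃ : 1 < p₃)
    (hsum : 1 / p₁ + 1 / p₂ + 1 / p₃ ≤ 1) (u v w : Fin n → ℝ≥0) :
    ∑ i, u i * v i * w i ≤ (n : ℝ≥0) ^ (1 - (1 / p₁ + 1 / p₂ + 1 / p₃)) *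
      ((∑ i, u i ^ p₁) ^ (1 / p₁) * ((∑ i, v i ^ p₂) ^ (1 / p₂) * (∑ i, w i ^ p₃) ^ (1 / p₃))) := by
  have hp₁0 : 0 < p₁ := lt_trans one_pos hp₁
  have hp₂0 : 0 < p₂ := lt_trans one_pos hp₂
  have hp₃0 : 0 < p₃ := lt_trans one_pos hp₃
  set t : ℝ := (1 - 1 / p₁ - 1 / p₂)⁻¹ with htdef
  have ht0 : 0 < 1 - 1 / p₁ - 1 / p₂ := by
    have : 0 < 1 / p₃ := by positivity
    linarith
  have htpos : 0 < t := by positivity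
  have ht : 1 / t = 1 - 1 / p₁ - 1 / p₂ := by rw [one_div, inv_inv]
  have htp₃ : t ≤ p₃ := by
    rw [← inv_inv p₃, htdef]
    apply inv_anti₀ (by positivity)
    rw [← one_div]; linarith
  set q : ℝ := (1 - 1 / p₁)⁻¹ with hqdef
  have hq0 : 0 < 1 - 1 / p₁ := by
    have h2 : 0 < 1 / p₂ := by positivity
    have h3 : 0 < 1 / p₃ := by positivity
    linarith
  have hq : 1 / q = 1 - 1 / p₁ := by rw [one_div, inv_inv]
  have hqpos : 0 < q := by positivity
  have conj1 : p₁.HolderConjugate q := Real.holderConjugate_iff.mpr ⟨hp₁, by rw [inv_inv]; field_simp; ring⟩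
  have step1 : ∑ i, u i * v i * w i ≤
      (∑ i, u i ^ p₁) ^ (1 / p₁) * (∑ i, (v i * w i) ^ q) ^ (1 / q) := by
    have := NNReal.inner_le_Lp_mul_Lq Finset.univ u (fun i => v i * w i) conj1
    simpa [mul_assoc] using this
  have hq_lt_p₂ : q < p₂ := by
    have h1 : p₂⁻¹ < 1 - 1 / p₁ := by
      have h3 : 0 < 1 / p₃ := by positivity
      have h2 : p₂⁻¹ = 1 / p₂ := (one_div p₂).symm
      rw [h2]; linarith
    have h2 := inv_strictAnti₀ (by positivity : (0:ℝ) < p₂⁻¹) h1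
    rwa [inv_inv] at h2
  have conj2 : (p₂ / q).HolderConjugate (t / q) := by
    rw [Real.holderConjugate_iff]; constructor
    · rw [lt_div_iff₀ hqpos, one_mul]; exact hq_lt_p₂
    · have h5 : (p₂ / q)⁻¹ + (t / q)⁻¹ = q * (1 / p₂ + 1 / t) := by
        rw [inv_div, inv_div]; ring
      have h4 : 1 / p₂ + 1 / t = 1 - 1 / p₁ := by rw [ht]; ring
      rw [h5, h4, ← hq, one_div, mul_inv_cancel₀ hqpos.ne']
  have step2 : (∑ i, (v i * w i) ^ q) ^ (1 / q) ≤
      (∑ i, v i ^ p₂) ^ (1 / p₂) * (∑ i, w i ^ t) ^ (1 / t) := by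
    have raw := NNReal.inner_le_Lp_mul_Lq Finset.univ (fun i => v i ^ q) (fun i => w i ^ q) conj2
    simp only [← NNReal.rpow_mul] at raw
    have e2 : q * (p₂ / q) = p₂ := by field_simp
    have e3 : q * (t / q) = t := by field_simp
    rw [e2, e3] at raw
    have raw2 := NNReal.rpow_le_rpow raw (le_of_lt (by positivity : (0:ℝ) < 1 / q))
    calc (∑ i, (v i * w i) ^ q) ^ (1 / q)
        = (∑ i, v i ^ q * w i ^ q) ^ (1 / q) := by simp_rw [NNReal.mul_rpow]
      _ ≤ (((∑ i, v i ^ p₂) ^ (1 / (p₂ / q)) * (∑ i, w i ^ t) ^ (1 / (t / q)))) ^ (1 / q) := raw2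
      _ = (∑ i, v i ^ p₂) ^ (1 / p₂) * (∑ i, w i ^ t) ^ (1 / t) := by
          have ee2 : 1 / (p₂ / q) * (1 / q) = 1 / p₂ := by field_simp; try ring
          have ee3 : 1 / (t / q) * (1 / q) = 1 / t := by field_simp; try ring
          rw [NNReal.mul_rpow, ← NNReal.rpow_mul, ← NNReal.rpow_mul, ee2, ee3]
  have step3 : (∑ i, w i ^ t) ^ (1 / t) ≤
      (n : ℝ≥0) ^ (1 / t - 1 / p₃) * (∑ i, w i ^ p₃) ^ (1 / p₃) := by
    rcases eq_or_lt_of_le htp₃ with heq | hlt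
    · rw [heq, sub_self, NNReal.rpow_zero, one_mul]
    · have hu0 : 0 < 1 - t / p₃ := by
        have := (div_lt_one hp₃0).mpr hlt; linarith
      have conj3 : (p₃ / t).HolderConjugate ((1 - t / p₃)⁻¹) := by
        rw [Real.holderConjugate_iff]; constructor
        · rw [lt_div_iff₀ htpos, one_mul]; exact hlt
        · rw [inv_div, inv_inv]
          field_simp; ring
      have raw := NNReal.inner_le_Lp_mul_Lq Finset.univ (fun i => w i ^ t)
        (fun _ => (1 : ℝ≥0)) conj3
      simp only [mul_one, NNReal.one_rpow, Finset.sum_const, Finset.card_univ,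
        Fintype.card_fin, nsmul_eq_mul, mul_one, ← NNReal.rpow_mul] at raw
      have e4 : t * (p₃ / t) = p₃ := by field_simp
      rw [e4] at raw
      have raw2 := NNReal.rpow_le_rpow raw (le_of_lt (by positivity : (0:ℝ) < 1 / t))
      calc (∑ i, w i ^ t) ^ (1 / t)
          ≤ ((∑ i, w i ^ p₃) ^ (1 / (p₃ / t)) * (n : ℝ≥0) ^ (1 / (1 - t / p₃)⁻¹)) ^ (1 / t) := raw2
        _ = (n : ℝ≥0) ^ (1 / t - 1 / p₃) * (∑ i, w i ^ p₃) ^ (1 / p₃) := by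
            have ee1 : 1 / (p₃ / t) * (1 / t) = 1 / p₃ := by field_simp; try ring
            have ee4 : 1 / (1 - t / p₃)⁻¹ * (1 / t) = 1 / t - 1 / p₃ := by
              rw [one_div, inv_inv]; field_simp
            rw [NNReal.mul_rpow, ← NNReal.rpow_mul, ← NNReal.rpow_mul, ee1, ee4, mul_comm]
  have hee : 1 / t - 1 / p₃ = 1 - (1 / p₁ + 1 / p₂ + 1 / p₃) := by rw [ht]; ring
  calc ∑ i, u i * v i * w i
      ≤ (∑ i, u i ^ p₁) ^ (1 / p₁) * (∑ i, (v i * w i) ^ q) ^ (1 / q) := step1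
    _ ≤ (∑ i, u i ^ p₁) ^ (1 / p₁) *
        ((∑ i, v i ^ p₂) ^ (1 / p₂) * (∑ i, w i ^ t) ^ (1 / t)) := by
        exact mul_le_mul_right step2 _
    _ ≤ (∑ i, u i ^ p₁) ^ (1 / p₁) * ((∑ i, v i ^ p₂) ^ (1 / p₂) *
        ((n : ℝ≥0) ^ (1 / t - 1 / p₃) * (∑ i, w i ^ p₃) ^ (1 / p₃))) := by
        exact mul_le_mul_right (mul_le_mul_right step3 _) _
    _ = (n : ℝ≥0) ^ (1 - (1 / p₁ + 1 / p₂ + 1 / p₃)) *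
        ((∑ i, u i ^ p₁) ^ (1 / p₁) *
          ((∑ i, v i ^ p₂) ^ (1 / p₂) * (∑ i, w i ^ p₃) ^ (1 / p₃))) := by
        rw [hee]; ring

lemma holder3_real {n : ℕ} {p₁ p₂ p₃ r : ℝ} (hp₁ : 1 < p₁) (hp₂ : 1 < p₂) (hp₃ : 1 < p₃)
    (hsum : 1 / p₁ + 1 / p₂ + 1 / p₃ ≤ 1) (hr : 1 / r = 1 / p₁ + 1 / p₂ + 1 / p₃)
    (x y z : Fin n → ℝ) :
    ∑ i, x i * (y i * z i) ≤
      (n : ℝ) ^ (1 - 1 / r) * (pNorm p₁ x * (pNorm p₂ y * pNorm p₃ z)) := by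
  have key := holder3_nnreal hp₁ hp₂ hp₃ hsum (fun i => ‖x i‖₊) (fun i => ‖y i‖₊)
    (fun i => ‖z i‖₊)
  have keyR := NNReal.coe_le_coe.2 key
  push_cast at keyR
  simp only [Real.norm_eq_abs] at keyR
  have h1 : ∑ i, x i * (y i * z i) ≤ ∑ i, |x i| * |y i| * |z i| := by
    apply Finset.sum_le_sum
    intro i _
    calc x i * (y i * z i) ≤ |x i * (y i * z i)| := le_abs_self _
      _ = |x i| * |y i| * |z i| := by rw [abs_mul, abs_mul]; ring
  unfold pNorm
  rw [hr]
  calc ∑ i, x i * (y i * z i) ≤ ∑ i, |x i| * |y i| * |z i| := h1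
    _ ≤ (n : ℝ) ^ (1 - (1 / p₁ + 1 / p₂ + 1 / p₃)) *
        ((∑ i, |x i| ^ p₁) ^ (1 / p₁) *
          ((∑ i, |y i| ^ p₂) ^ (1 / p₂) * (∑ i, |z i| ^ p₃) ^ (1 / p₃))) := keyR

noncomputable def B3 (n : ℕ) :
    Module.Basis (Fin n × (Fin n × Fin n)) ℝ ((Fin n → ℝ) ⊗[ℝ] ((Fin n → ℝ) ⊗[ℝ] (Fin n → ℝ))) :=
  (Pi.basisFun ℝ (Fin n)).tensorProduct
    ((Pi.basisFun ℝ (Fin n)).tensorProduct (Pi.basisFun ℝ (Fin n)))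

lemma B3_repr {n : ℕ} (x y z : Fin n → ℝ) (i j k : Fin n) :
    (B3 n).repr (x ⊗ₜ[ℝ] (y ⊗ₜ[ℝ] z)) (i, (j, k)) = x i * (y j * z k) := by
  show (B3 n).repr (x ⊗ₜ[ℝ] (y ⊗ₜ[ℝ] z)) ((i, (j, k)).1, (i, (j, k)).2) = _
  rw [B3, Module.Basis.tensorProduct_repr_tmul_apply, Module.Basis.tensorProduct_repr_tmul_apply]
  simp [Pi.basisFun_repr, smul_eq_mul]
  ring

lemma diag_coeff {n : ℕ} (i j k : Fin n) :
    (B3 n).repr (∑ l : Fin n, (Pi.single l (1 : ℝ)) ⊗ₜ[ℝ]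
        ((Pi.single l (1 : ℝ)) ⊗ₜ[ℝ] (Pi.single l (1 : ℝ)))) (i, (j, k))
      = if i = j ∧ i = k then 1 else 0 := by
  rw [map_sum, Finsupp.finset_sum_apply,
    Finset.sum_congr rfl fun l _ => B3_repr _ _ _ i j k]
  have hterm : ∀ l : Fin n,
      (Pi.single l (1:ℝ) : Fin n → ℝ) i * ((Pi.single l (1:ℝ) : Fin n → ℝ) j *
        (Pi.single l (1:ℝ) : Fin n → ℝ) k)
        = if i = l then (if i = j ∧ i = k then (1:ℝ) else 0) else 0 := by
    intro l
    simp only [Pi.single_apply]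
    by_cases h1 : i = l <;> by_cases h2 : j = l <;> by_cases h3 : k = l <;>
      simp_all [eq_comm] <;> tauto
  rw [Finset.sum_congr rfl fun l _ => hterm l, Finset.sum_ite_eq Finset.univ i,
    if_pos (Finset.mem_univ i)]

lemma lower_bound {n : ℕ} {p₁ p₂ p₃ r : ℝ} (hp₁ : 1 < p₁) (hp₂ : 1 < p₂) (hp₃ : 1 < p₃)
    (hsum : 1 / p₁ + 1 / p₂ + 1 / p₃ ≤ 1) (hr : 1 / r = 1 / p₁ + 1 / p₂ + 1 / p₃)
    {m : ℕ} (x y z : Fin m → (Fin n → ℝ))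
    (hrep : (∑ i : Fin n, (Pi.single i (1 : ℝ)) ⊗ₜ[ℝ]
        ((Pi.single i (1 : ℝ)) ⊗ₜ[ℝ] (Pi.single i (1 : ℝ))))
      = ∑ j, x j ⊗ₜ[ℝ] (y j ⊗ₜ[ℝ] z j)) :
    (n : ℝ) ^ (1 / r) ≤ ∑ j, pNorm p₁ (x j) * pNorm p₂ (y j) * pNorm p₃ (z j) := by
  have coeff : ∀ i : Fin n, ∑ j, x j i * (y j i * z j i) = 1 := by
    intro i
    have h := congrArg (fun tt => (B3 n).repr tt (i, (i, i))) hrep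
    rw [diag_coeff i i i, if_pos ⟨rfl, rfl⟩] at h
    rw [map_sum, Finsupp.finset_sum_apply,
      Finset.sum_congr rfl fun j _ => B3_repr _ _ _ i i i] at h
    exact h.symm
  have hn : (n : ℝ) = ∑ j, ∑ i, x j i * (y j i * z j i) := by
    rw [Finset.sum_comm, Finset.sum_congr rfl fun i _ => coeff i]
    simp
  have hle : (n : ℝ) ≤ (n : ℝ) ^ (1 - 1 / r) *
      (∑ j, pNorm p₁ (x j) * pNorm p₂ (y j) * pNorm p₃ (z j)) := by
    calc (n : ℝ) = ∑ j, ∑ i, x j i * (y j i * z j i) := hn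
      _ ≤ ∑ j, (n : ℝ) ^ (1 - 1 / r) *
          (pNorm p₁ (x j) * pNorm p₂ (y j) * pNorm p₃ (z j)) := by
          apply Finset.sum_le_sum
          intro j _
          calc ∑ i, x j i * (y j i * z j i)
              ≤ (n : ℝ) ^ (1 - 1 / r) *
                (pNorm p₁ (x j) * (pNorm p₂ (y j) * pNorm p₃ (z j))) :=
                holder3_real hp₁ hp₂ hp₃ hsum hr _ _ _
            _ = (n : ℝ) ^ (1 - 1 / r) *
                (pNorm p₁ (x j) * pNorm p₂ (y j) * pNorm p₃ (z j)) := by ring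
      _ = (n : ℝ) ^ (1 - 1 / r) *
          (∑ j, pNorm p₁ (x j) * pNorm p₂ (y j) * pNorm p₃ (z j)) := by
          rw [← Finset.mul_sum]
  have hsnn : 0 ≤ ∑ j, pNorm p₁ (x j) * pNorm p₂ (y j) * pNorm p₃ (z j) :=
    Finset.sum_nonneg fun j _ => by
      have := pNorm_nonneg p₁ (x j); have := pNorm_nonneg p₂ (y j)
      have := pNorm_nonneg p₃ (z j); positivity
  rcases Nat.eq_zero_or_pos n with rfl | hn0
  · simp only [Nat.cast_zero]
    rw [Real.zero_rpow]
    · exact hsnn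
    · intro hc
      rw [hc] at hr
      have h1 : 0 < 1 / p₁ := by positivity
      have h2 : 0 < 1 / p₂ := by positivity
      have h3 : 0 < 1 / p₃ := by positivity
      simp only [one_div] at hr h1 h2 h3
      linarith
  · have hnpos : (0 : ℝ) < (n : ℝ) := by exact_mod_cast hn0
    have hfac : (0 : ℝ) < (n : ℝ) ^ (1 - 1 / r) := Real.rpow_pos_of_pos hnpos _
    rw [← mul_le_mul_iff_right₀ hfac]
    calc (n : ℝ) ^ (1 - 1 / r) * (n : ℝ) ^ (1 / r) = (n : ℝ) := by
          rw [← Real.rpow_add hnpos]; norm_num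
      _ ≤ (n : ℝ) ^ (1 - 1 / r) *
          (∑ j, pNorm p₁ (x j) * pNorm p₂ (y j) * pNorm p₃ (z j)) := hle

lemma rep_eq (n : ℕ) :
    ∑ pr : (Fin n → Bool) × (Fin n → Bool),
      ((((2:ℝ)^n)⁻¹ * ((2:ℝ)^n)⁻¹) • (sgn pr.1 * sgn pr.2)) ⊗ₜ[ℝ]
        (sgn pr.1 ⊗ₜ[ℝ] sgn pr.2)
    = ∑ i : Fin n, (Pi.single i (1 : ℝ)) ⊗ₜ[ℝ]
        ((Pi.single i (1 : ℝ)) ⊗ₜ[ℝ] (Pi.single i (1 : ℝ))) := by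
  set c : ℝ := ((2:ℝ)^n)⁻¹ * ((2:ℝ)^n)⁻¹ with hc
  apply (B3 n).repr.injective
  ext ⟨i, j, k⟩
  rw [map_sum, Finsupp.finset_sum_apply, diag_coeff i j k,
    Finset.sum_congr rfl fun pr _ => B3_repr _ _ _ i j k]
  have hterm : ∀ pr : (Fin n → Bool) × (Fin n → Bool),
      (c • (sgn pr.1 * sgn pr.2)) i * (sgn pr.1 j * sgn pr.2 k)
        = (sgn pr.1 i * sgn pr.1 j) * (c * (sgn pr.2 i * sgn pr.2 k)) := by
    intro pr
    simp only [Pi.smul_apply, Pi.mul_apply, smul_eq_mul]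
    ring
  rw [Finset.sum_congr rfl fun pr _ => hterm pr, Fintype.sum_prod_type]
  have hinner : ∀ s : Fin n → Bool,
      ∑ t : Fin n → Bool, (sgn s i * sgn s j) * (c * (sgn t i * sgn t k))
        = (sgn s i * sgn s j) * (c * (if i = k then (2:ℝ)^n else 0)) := by
    intro s
    rw [← Finset.mul_sum, ← Finset.mul_sum, sum_sgn_mul i k]
  rw [Finset.sum_congr rfl fun s _ => hinner s, ← Finset.sum_mul, sum_sgn_mul i j]
  have h2n : ((2:ℝ)^n) ≠ 0 := by positivity
  by_cases hij : i = j <;> by_cases hik : i = k <;>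
    simp [hij, hik, hc] <;> field_simp

/-- The projective tensor norm on `ℓ_{p₁}^n ⊗̂ ℓ_{p₂}^n ⊗̂ ℓ_{p₃}^n`. -/
noncomputable def projNorm3 (p₁ p₂ p₃ : ℝ) {n : ℕ}
    (t : (Fin n → ℝ) ⊗[ℝ] ((Fin n → ℝ) ⊗[ℝ] (Fin n → ℝ))) : ℝ :=
  sInf {s : ℝ | ∃ (m : ℕ) (x y z : Fin m → (Fin n → ℝ)),
    t = ∑ j, x j ⊗ₜ[ℝ] (y j ⊗ₜ[ℝ] z j) ∧
    s = ∑ j, pNorm p₁ (x j) * pNorm p₂ (y j) * pNorm p₃ (z j)}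

/-- if `1/p₁ + 1/p₂ + 1/p₃ ≤ 1` and `1/r = 1/p₁ + 1/p₂ + 1/p₃`, then the
projective norm of the diagonal tensor `Σᵢ eᵢ ⊗ eᵢ ⊗ eᵢ` in
`ℓ_{p₁}^n ⊗̂ ℓ_{p₂}^n ⊗̂ ℓ_{p₃}^n` equals `n^{1/r}`. -/
theorem projNorm3_diagonal_eq (p₁ p₂ p₃ r : ℝ)
    (hp₁ : 1 < p₁) (hp₂ : 1 < p₂) (hp₃ : 1 < p₃)
    (hsum : 1 / p₁ + 1 / p₂ + 1 / p₃ ≤ 1)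
    (hr : 1 / r = 1 / p₁ + 1 / p₂ + 1 / p₃) (n : ℕ) :
    projNorm3 p₁ p₂ p₃
        (∑ i : Fin n, (Pi.single i (1 : ℝ)) ⊗ₜ[ℝ]
          ((Pi.single i (1 : ℝ)) ⊗ₜ[ℝ] (Pi.single i (1 : ℝ))))
      = (n : ℝ) ^ (1 / r) := by
  rw [projNorm3]
  have hp₁0 : 0 < p₁ := lt_trans one_pos hp₁
  have hp₂0 : 0 < p₂ := lt_trans one_pos hp₂
  have hp₃0 : 0 < p₃ := lt_trans one_pos hp₃
  have hrX : (n : ℝ) ^ (1/p₁) * ((n : ℝ) ^ (1/p₂) * (n : ℝ) ^ (1/p₃)) = (n : ℝ) ^ (1/r) := by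
    rw [hr]
    rcases Nat.eq_zero_or_pos n with rfl | hn0
    · simp only [Nat.cast_zero]
      rw [Real.zero_rpow (by positivity : 1/p₁ ≠ 0),
        Real.zero_rpow (by positivity : 1/p₂ ≠ 0),
        Real.zero_rpow (by positivity : (1:ℝ)/p₁ + 1/p₂ + 1/p₃ ≠ 0), zero_mul]
    · have hnpos : (0 : ℝ) < (n : ℝ) := by exact_mod_cast hn0
      rw [Real.rpow_add hnpos, Real.rpow_add hnpos, mul_assoc]
  set c : ℝ := ((2:ℝ)^n)⁻¹ * ((2:ℝ)^n)⁻¹ with hcdef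
  have hc0 : 0 ≤ c := by positivity
  have hcard : Fintype.card ((Fin n → Bool) × (Fin n → Bool)) = 2^n * 2^n := by
    simp [Fintype.card_fun]
  let e : ((Fin n → Bool) × (Fin n → Bool)) ≃ Fin (2^n * 2^n) :=
    Fintype.equivFinOfCardEq hcard
  set X : Fin (2^n * 2^n) → (Fin n → ℝ) :=
    fun j => c • (sgn (e.symm j).1 * sgn (e.symm j).2) with hX
  set Y : Fin (2^n * 2^n) → (Fin n → ℝ) := fun j => sgn (e.symm j).1 with hY
  set Z : Fin (2^n * 2^n) → (Fin n → ℝ) := fun j => sgn (e.symm j).2 with hZ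
  have hrep : (∑ i : Fin n, (Pi.single i (1 : ℝ)) ⊗ₜ[ℝ]
        ((Pi.single i (1 : ℝ)) ⊗ₜ[ℝ] (Pi.single i (1 : ℝ))))
      = ∑ j, X j ⊗ₜ[ℝ] (Y j ⊗ₜ[ℝ] Z j) := by
    rw [← rep_eq n]
    exact (Equiv.sum_comp e.symm (fun pr => ((c • (sgn pr.1 * sgn pr.2)) ⊗ₜ[ℝ]
      (sgn pr.1 ⊗ₜ[ℝ] sgn pr.2)))).symm
  have hcost : ∑ j, pNorm p₁ (X j) * pNorm p₂ (Y j) * pNorm p₃ (Z j)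
      = (n : ℝ) ^ (1/r) := by
    have hterm : ∀ j, pNorm p₁ (X j) * pNorm p₂ (Y j) * pNorm p₃ (Z j)
        = c * ((n : ℝ) ^ (1/p₁) * ((n : ℝ) ^ (1/p₂) * (n : ℝ) ^ (1/p₃))) := by
      intro j
      have h1 : pNorm p₁ (X j) = c * (n : ℝ) ^ (1/p₁) := by
        apply pNorm_const_abs hp₁0 hc0
        intro i
        simp only [hX, Pi.smul_apply, Pi.mul_apply, smul_eq_mul, abs_mul, sgn_abs,
          mul_one, abs_of_nonneg hc0]
      have h2 : pNorm p₂ (Y j) = (n : ℝ) ^ (1/p₂) := by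
        rw [pNorm_const_abs hp₂0 zero_le_one (fun i => sgn_abs (e.symm j).1 i), one_mul]
      have h3 : pNorm p₃ (Z j) = (n : ℝ) ^ (1/p₃) := by
        rw [pNorm_const_abs hp₃0 zero_le_one (fun i => sgn_abs (e.symm j).2 i), one_mul]
      rw [h1, h2, h3]; ring
    rw [Finset.sum_congr rfl fun j _ => hterm j, Finset.sum_const, Finset.card_univ,
      Fintype.card_fin, nsmul_eq_mul]
    push_cast
    rw [hcdef, ← hrX]
    have h2n : ((2:ℝ)^n) ≠ 0 := by positivity
    field_simp
  apply le_antisymm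
  · apply csInf_le
    · exact ⟨(n : ℝ) ^ (1/r), by
        rintro s ⟨m, x, y, z, hrepr, hs⟩
        rw [hs]
        exact lower_bound hp₁ hp₂ hp₃ hsum hr x y z hrepr⟩
    · exact ⟨2^n * 2^n, X, Y, Z, hrep, hcost.symm⟩
  · apply le_csInf
    · exact ⟨(n : ℝ) ^ (1/r), 2^n * 2^n, X, Y, Z, hrep, hcost.symm⟩
    · rintro s ⟨m, x, y, z, hrepr, hs⟩
      rw [hs]
      exact lower_bound hp₁ hp₂ hp₃ hsum hr x y z hrepr
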